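/- Let Φ: ℂⁿ ∖ {z₁ = 0} → (ℂ∖{0}) × ℂ^{n-1} be given by (z₁,…,z_n) ↦ (z₁, z₂/z₁, …, z_n/z₁), and let φ: (S^{2n-1} ∖ {z₁=0})∞ → S¹∞ × ℂ^{n-1} be given by (z₁,…,z_n)∞ ↦ ((z₁/|z₁|)∞, z₂/z₁, …, z_n/z₁). Then the map Φ̂ = Φ ⊔ φ from 𝔻_{ℂⁿ} ∖ closure({z₁ = 0}) to (𝔻_ℂ ∖ {0}) × ℂ^{n-1} is a homeomorphism. -/

import Mathlib

open Metric Filter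

noncomputable section

/-- `ℂⁿ` with the Euclidean norm. -/
abbrev Cn (n : ℕ) := EuclideanSpace ℂ (Fin n)

/-- The radial compactification `𝔻_E` of `E = ℂⁿ`, as the disjoint union of `ℂⁿ`
and a copy `S^{2n-1}∞` of the unit sphere. -/
abbrev DE (n : ℕ) := Cn n ⊕ Metric.sphere (0 : Cn n) 1

/-- The bijection `φ : D → 𝔻_E`, `φ(z) = z/(1-|z|)` on the open ball and `φ(z) = z∞`
on the boundary sphere. -/
noncomputable def phiD (n : ℕ) : Metric.closedBall (0 : Cn n) 1 → DE n :=
  fun z =>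
    if h : ‖(z : Cn n)‖ < 1 then
      Sum.inl ((1 - ‖(z : Cn n)‖)⁻¹ • (z : Cn n))
    else
      Sum.inr ⟨(z : Cn n), by
        have h1 : ‖(z : Cn n)‖ ≤ 1 := mem_closedBall_zero_iff.mp z.2
        exact mem_sphere_zero_iff_norm.mpr (le_antisymm h1 (not_lt.mp h))⟩

/-- The topology on `𝔻_E`, transported from the closed unit ball via `φ`
(so that `φ` is a homeomorphism). -/
instance DEtop (n : ℕ) : TopologicalSpace (DE n) :=
  TopologicalSpace.coinduced (phiD n) inferInstance

/-- The radial compactification `𝔻_ℂ = ℂ ⊔ S¹∞` of `ℂ`. -/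
abbrev DC := ℂ ⊕ Metric.sphere (0 : ℂ) 1

/-- The bijection from the closed unit disc to `𝔻_ℂ`. -/
noncomputable def phiDC : Metric.closedBall (0 : ℂ) 1 → DC :=
  fun z =>
    if h : ‖(z : ℂ)‖ < 1 then
      Sum.inl ((1 - ‖(z : ℂ)‖)⁻¹ • (z : ℂ))
    else
      Sum.inr ⟨(z : ℂ), by
        have h1 : ‖(z : ℂ)‖ ≤ 1 := mem_closedBall_zero_iff.mp z.2
        exact mem_sphere_zero_iff_norm.mpr (le_antisymm h1 (not_lt.mp h))⟩

/-- The topology of `𝔻_ℂ`, transported from the closed unit disc via `phiDC`. -/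
instance DCtop : TopologicalSpace DC :=
  TopologicalSpace.coinduced phiDC inferInstance

/-- The hyperplane `{z₁ = 0}` viewed inside `𝔻_{ℂⁿ}` (as a set of finite points). -/
def Hhyp (m : ℕ) : Set (DE (m + 1)) :=
  {p | ∃ z : Cn (m + 1), z 0 = 0 ∧ p = Sum.inl z}
section Generic

variable {E : Type*} [NormedAddCommGroup E] [NormedSpace ℝ E]

/-- Generic version of `phiD`/`phiDC`. -/
noncomputable def phiG : Metric.closedBall (0 : E) 1 → E ⊕ Metric.sphere (0 : E) 1 :=
  fun z =>
    if h : ‖(z : E)‖ < 1 then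
      Sum.inl ((1 - ‖(z : E)‖)⁻¹ • (z : E))
    else
      Sum.inr ⟨(z : E), by
        have h1 : ‖(z : E)‖ ≤ 1 := mem_closedBall_zero_iff.mp z.2
        exact mem_sphere_zero_iff_norm.mpr (le_antisymm h1 (not_lt.mp h))⟩

/-- Generic inverse. -/
noncomputable def psiG : E ⊕ Metric.sphere (0 : E) 1 → Metric.closedBall (0 : E) 1 :=
  fun p =>
    match p with
    | Sum.inl u => ⟨(1 + ‖u‖)⁻¹ • u, by
        have h0 : (0:ℝ) < 1 + ‖u‖ := by positivity
        rw [mem_closedBall_zero_iff, norm_smul, norm_inv, Real.norm_eq_abs,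
          abs_of_pos h0, inv_mul_le_one₀ h0]  -- guess name
        linarith⟩
    | Sum.inr x => ⟨(x : E), by
        rw [mem_closedBall_zero_iff, mem_sphere_zero_iff_norm.mp x.2]⟩

theorem psiG_phiG (z : Metric.closedBall (0 : E) 1) : psiG (phiG z) = z := by
  rcases z with ⟨z, hz⟩
  by_cases h : ‖z‖ < 1
  · have h1 : (0:ℝ) < 1 - ‖z‖ := by linarith
    simp only [phiG, dif_pos h, psiG]
    ext
    simp only
    rw [norm_smul, norm_inv, Real.norm_eq_abs, abs_of_pos h1]
    rw [smul_smul]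
    have : (1 + (1 - ‖z‖)⁻¹ * ‖z‖) = (1 - ‖z‖)⁻¹ := by
      field_simp
      ring
    rw [this, inv_inv]
    rw [mul_inv_cancel₀ h1.ne', one_smul]
  · simp only [phiG, dif_neg h, psiG]

theorem phiG_psiG (p : E ⊕ Metric.sphere (0 : E) 1) : phiG (psiG p) = p := by
  rcases p with u | x
  · have h0 : (0:ℝ) < 1 + ‖u‖ := by positivity
    have hn : ‖(1 + ‖u‖)⁻¹ • u‖ = ‖u‖ / (1 + ‖u‖) := by
      rw [norm_smul, norm_inv, Real.norm_eq_abs, abs_of_pos h0, inv_mul_eq_div]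
    have hlt : ‖(1 + ‖u‖)⁻¹ • u‖ < 1 := by
      rw [hn, div_lt_one h0]; linarith
    simp only [phiG]
    rw [dif_pos (show ‖(psiG (Sum.inl u) : E)‖ < 1 from hlt)]
    simp only [psiG]
    congr 1
    rw [hn]
    have : (1 - ‖u‖ / (1 + ‖u‖)) = (1 + ‖u‖)⁻¹ := by field_simp; ring
    rw [this, inv_inv, smul_smul, mul_inv_cancel₀ h0.ne', one_smul]
  · have h : ¬ ‖(x : E)‖ < 1 := by
      rw [mem_sphere_zero_iff_norm.mp x.2]; exact lt_irrefl 1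
    simp only [phiG]
    rw [dif_neg (show ¬ ‖(psiG (Sum.inr x) : E)‖ < 1 from h)]
    rfl

theorem phiD_eq (n : ℕ) : phiD n = phiG := rfl
theorem phiDC_eq : phiDC = phiG := rfl

end Generic
/-- A bijection onto a space with coinduced topology is a homeomorphism. -/
noncomputable def coinducedHomeo {X Y : Type*} [tX : TopologicalSpace X] [tY : TopologicalSpace Y]
    (e : X ≃ Y) (h : tY = tX.coinduced e) : X ≃ₜ Y :=
  Equiv.toHomeomorphOfContinuousOpen e
    (by rw [continuous_iff_coinduced_le, h])
    (by
      intro U hU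
      rw [h, isOpen_coinduced, Set.preimage_image_eq U e.injective]
      exact hU)

/-- The equivalence between the closed ball and `DE n`. -/
noncomputable def eqDE (n : ℕ) : Metric.closedBall (0 : Cn n) 1 ≃ DE n where
  toFun := phiD n
  invFun := psiG
  left_inv z := by rw [phiD_eq]; exact psiG_phiG z
  right_inv p := by rw [phiD_eq]; exact phiG_psiG p

noncomputable def eqDC : Metric.closedBall (0 : ℂ) 1 ≃ DC where
  toFun := phiDC
  invFun := psiG
  left_inv z := by rw [phiDC_eq]; exact psiG_phiG z
  right_inv p := by rw [phiDC_eq]; exact phiG_psiG p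

noncomputable def hDE (n : ℕ) : Metric.closedBall (0 : Cn n) 1 ≃ₜ DE n :=
  coinducedHomeo (eqDE n) rfl

noncomputable def hDC : Metric.closedBall (0 : ℂ) 1 ≃ₜ DC :=
  coinducedHomeo eqDC rfl
section Closure

variable (m : ℕ)

theorem coordCont (n : ℕ) (i : Fin n) : Continuous fun z : Cn n => z i :=
  (EuclideanSpace.proj i).continuous

theorem closure_slice (n : ℕ) (i : Fin n) :
    closure {z : Cn n | ‖z‖ < 1 ∧ z i = 0} = {z : Cn n | ‖z‖ ≤ 1 ∧ z i = 0} := by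
  apply le_antisymm
  · apply closure_minimal
    · intro z hz; exact ⟨hz.1.le, hz.2⟩
    · exact (isClosed_Iic.preimage (continuous_norm)).inter
        ((isClosed_singleton (x := (0:ℂ))).preimage (coordCont n i))
  · rintro z ⟨hz1, hz2⟩
    have ht : Filter.Tendsto (fun k : ℕ => (1 - (1:ℝ)/(k+1)) • z) atTop (nhds z) := by
      have h1 : Filter.Tendsto (fun k : ℕ => (1 - (1:ℝ)/(k+1))) atTop (nhds 1) := by
        have := tendsto_one_div_add_atTop_nhds_zero_nat (𝕜 := ℝ)
        have h2 := (tendsto_const_nhds (x := (1:ℝ)) (f := atTop)).sub this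
        simpa using h2
      have := h1.smul_const z
      simpa using this
    refine mem_closure_of_tendsto ht (Filter.Eventually.of_forall fun k => ?_)
    have hk0 : (0:ℝ) < 1/(k+1) := by positivity
    have hk1 : (1:ℝ)/(k+1) ≤ 1 := by
      rw [div_le_one (by positivity)]; linarith [Nat.cast_nonneg (α := ℝ) k]
    constructor
    · have : ‖(1 - (1:ℝ)/(k+1)) • z‖ = (1 - 1/(k+1)) * ‖z‖ := by
        rw [norm_smul, Real.norm_eq_abs, abs_of_nonneg (by linarith)]
      rw [this]
      calc (1 - 1/((k:ℝ)+1)) * ‖z‖ ≤ (1 - 1/((k:ℝ)+1)) * 1 := by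
            apply mul_le_mul_of_nonneg_left hz1 (by linarith)
        _ < 1 := by linarith
    · show ((1 - (1:ℝ)/(k+1)) • z) i = 0
      rw [PiLp.smul_apply, hz2, smul_zero]

theorem Hhyp_eq :
    Hhyp m = phiD (m+1) ''
      {ζ : Metric.closedBall (0 : Cn (m+1)) 1 | ‖(ζ : Cn (m+1))‖ < 1 ∧ (ζ : Cn (m+1)) 0 = 0} := by
  ext p
  constructor
  · rintro ⟨z, hz0, rfl⟩
    refine ⟨psiG (Sum.inl z), ?_, ?_⟩
    · constructor
      · show ‖(1 + ‖z‖)⁻¹ • z‖ < 1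
        have h0 : (0:ℝ) < 1 + ‖z‖ := by positivity
        rw [norm_smul, norm_inv, Real.norm_eq_abs, abs_of_pos h0]
        rw [inv_mul_eq_div, div_lt_one h0]; linarith
      · show ((1 + ‖z‖)⁻¹ • z) 0 = 0
        rw [PiLp.smul_apply, hz0, smul_zero]
    · rw [phiD_eq]; exact phiG_psiG (Sum.inl z)
  · rintro ⟨ζ, ⟨h1, h2⟩, rfl⟩
    refine ⟨(1 - ‖(ζ : Cn (m+1))‖)⁻¹ • (ζ : Cn (m+1)), ?_, ?_⟩
    · rw [PiLp.smul_apply, h2, smul_zero]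
    · simp only [phiD, dif_pos h1]

theorem hDE_coe (n : ℕ) : ⇑(hDE n) = phiD n := rfl

theorem mem_closure_Hhyp (ζ : Metric.closedBall (0 : Cn (m+1)) 1) :
    phiD (m+1) ζ ∈ closure (Hhyp m) ↔ (ζ : Cn (m+1)) 0 = 0 := by
  rw [Hhyp_eq m, ← hDE_coe (m+1), ← (hDE (m+1)).image_closure]
  rw [Set.mem_image]
  constructor
  · rintro ⟨ζ', hζ', hc⟩
    have : ζ' = ζ := (hDE (m+1)).injective (by rw [hc])
    subst this
    rw [closure_subtype] at hζ'
    have himg : (Subtype.val '' {ζ : Metric.closedBall (0 : Cn (m+1)) 1 |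
        ‖(ζ : Cn (m+1))‖ < 1 ∧ (ζ : Cn (m+1)) 0 = 0}) = {z : Cn (m+1) | ‖z‖ < 1 ∧ z 0 = 0} := by
      ext z
      constructor
      · rintro ⟨ζ, hζ, rfl⟩; exact hζ
      · rintro ⟨h1, h2⟩
        exact ⟨⟨z, mem_closedBall_zero_iff.mpr h1.le⟩, ⟨h1, h2⟩, rfl⟩
    rw [himg, closure_slice] at hζ'
    exact hζ'.2
  · intro h0
    refine ⟨ζ, ?_, rfl⟩
    rw [closure_subtype]
    have himg : (Subtype.val '' {ζ : Metric.closedBall (0 : Cn (m+1)) 1 |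
        ‖(ζ : Cn (m+1))‖ < 1 ∧ (ζ : Cn (m+1)) 0 = 0}) = {z : Cn (m+1) | ‖z‖ < 1 ∧ z 0 = 0} := by
      ext z
      constructor
      · rintro ⟨ζ, hζ, rfl⟩; exact hζ
      · rintro ⟨h1, h2⟩
        exact ⟨⟨z, mem_closedBall_zero_iff.mpr h1.le⟩, ⟨h1, h2⟩, rfl⟩
    rw [himg, closure_slice]
    exact ⟨mem_closedBall_zero_iff.mp ζ.2, h0⟩

theorem phiDC_eq_inl_zero_iff (ζ : Metric.closedBall (0 : ℂ) 1) :
    phiDC ζ = Sum.inl 0 ↔ (ζ : ℂ) = 0 := by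
  by_cases h : ‖(ζ : ℂ)‖ < 1
  · simp only [phiDC, dif_pos h]
    constructor
    · intro hh
      have := Sum.inl.inj hh
      have hne : (1 - ‖(ζ : ℂ)‖)⁻¹ ≠ 0 := by
        apply inv_ne_zero; intro hc; rw [sub_eq_zero] at hc; rw [← hc] at h; exact lt_irrefl _ h
      exact (smul_eq_zero.mp this).resolve_left hne
    · intro hh; rw [hh, smul_zero]
  · simp only [phiDC, dif_neg h]
    constructor
    · intro hh; exact absurd hh (by simp)
    · intro hh; rw [hh] at h; simp at h

end Closure
section Core

theorem real_alg1 (a b d : ℝ) (hb : b ≠ 0) (hd : d ≠ 0) (hdef : d = 1 - a + b) :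
    1 + b / d * (a / b - 1) = d⁻¹ := by
  field_simp
  linear_combination hdef

theorem real_alg2 (wn E D : ℝ) (hD : D ≠ 0) (hdef : D = 1 + wn*(E-1)) :
    1 - wn/D*E + wn/D = D⁻¹ := by
  field_simp
  linear_combination hdef


variable (m : ℕ)

/-- The denominator `1 - ‖z‖ + |z₀|`. -/
def dd (z : Cn (m+1)) : ℝ := 1 - ‖z‖ + ‖z 0‖

theorem dd_pos {z : Cn (m+1)} (h1 : ‖z‖ ≤ 1) (h0 : z 0 ≠ 0) : 0 < dd m z := by
  have h2 : 0 < ‖z 0‖ := norm_pos_iff.mpr h0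
  unfold dd; linarith

/-- `E(v) = √(1 + ‖v‖²)`. -/
def Ee (v : Fin m → ℂ) : ℝ := Real.sqrt (1 + ∑ i : Fin m, ‖v i‖^2)

theorem Ee_nonneg_arg (v : Fin m → ℂ) : (0:ℝ) ≤ 1 + ∑ i : Fin m, ‖v i‖^2 := by positivity

theorem one_le_Ee (v : Fin m → ℂ) : 1 ≤ Ee m v := by
  rw [show (1:ℝ) = Real.sqrt 1 from (Real.sqrt_one).symm]
  apply Real.sqrt_le_sqrt
  have : (0:ℝ) ≤ ∑ i : Fin m, ‖v i‖^2 := by positivity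
  linarith

/-- `D(w,v) = 1 + |w| (E(v) - 1)`. -/
def Dd (w : ℂ) (v : Fin m → ℂ) : ℝ := 1 + ‖w‖ * (Ee m v - 1)

theorem one_le_Dd (w : ℂ) (v : Fin m → ℂ) : 1 ≤ Dd m w v := by
  have h1 := one_le_Ee m v
  have : 0 ≤ ‖w‖ * (Ee m v - 1) := mul_nonneg (norm_nonneg w) (by linarith)
  unfold Dd; linarith

theorem Dd_pos (w : ℂ) (v : Fin m → ℂ) : 0 < Dd m w v := lt_of_lt_of_le one_pos (one_le_Dd m w v)

/-- The vector `c • (1, v)` in `ℂ^{m+1}`. -/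
def vecG (c : ℂ) (v : Fin m → ℂ) : Cn (m+1) :=
  (WithLp.equiv 2 (Fin (m+1) → ℂ)).symm (fun j => c * Fin.cases 1 v j)

theorem vecG_zero (c : ℂ) (v : Fin m → ℂ) : vecG m c v 0 = c := by
  unfold vecG
  rw [WithLp.equiv_symm_apply]
  simp

theorem vecG_succ (c : ℂ) (v : Fin m → ℂ) (i : Fin m) : vecG m c v i.succ = c * v i := by
  unfold vecG
  rw [WithLp.equiv_symm_apply]
  simp

theorem vecG_norm (c : ℂ) (v : Fin m → ℂ) : ‖vecG m c v‖ = ‖c‖ * Ee m v := by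
  rw [EuclideanSpace.norm_eq]
  have : ∑ j, ‖vecG m c v j‖^2 = ‖c‖^2 * (1 + ∑ i : Fin m, ‖v i‖^2) := by
    rw [Fin.sum_univ_succ, vecG_zero]
    have hsucc : ∀ i : Fin m, ‖vecG m c v i.succ‖^2 = ‖c‖^2 * ‖v i‖^2 := by
      intro i; rw [vecG_succ, norm_mul, mul_pow]
    rw [Finset.sum_congr rfl (fun i _ => hsucc i), ← Finset.mul_sum]
    ring
  rw [this, Real.sqrt_mul (sq_nonneg _), Real.sqrt_sq (norm_nonneg c)]
  rfl

theorem sum_sq_norm (z : Cn (m+1)) : ∑ j, ‖z j‖^2 = ‖z‖^2 := by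
  rw [EuclideanSpace.norm_eq, Real.sq_sqrt]
  positivity

theorem Ee_of (z : Cn (m+1)) (h0 : z 0 ≠ 0) :
    Ee m (fun i => z i.succ / z 0) = ‖z‖ / ‖z 0‖ := by
  have hz0 : (0:ℝ) < ‖z 0‖ := norm_pos_iff.mpr h0
  show Real.sqrt (1 + ∑ i : Fin m, ‖z i.succ / z 0‖^2) = ‖z‖ / ‖z 0‖
  have harg : 1 + ∑ i : Fin m, ‖z i.succ / z 0‖^2 = (‖z‖ / ‖z 0‖)^2 := by
    have hterm : ∀ i : Fin m, ‖z i.succ / z 0‖^2 = ‖z i.succ‖^2 / ‖z 0‖^2 := by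
      intro i; rw [norm_div, div_pow]
    rw [Finset.sum_congr rfl (fun i _ => hterm i), ← Finset.sum_div, div_pow,
      ← sum_sq_norm m z, Fin.sum_univ_succ]
    have hB : ‖z 0‖ ^ 2 ≠ 0 := pow_ne_zero 2 hz0.ne'
    rw [add_div, div_self hB]
  rw [harg, Real.sqrt_sq (div_nonneg (norm_nonneg z) (norm_nonneg _))]

set_option maxHeartbeats 1000000 in
/-- The core equivalence between the punctured closed ball and the punctured disc times `ℂ^m`. -/
noncomputable def coreEquiv :
    {ζ : Metric.closedBall (0 : Cn (m+1)) 1 // (ζ : Cn (m+1)) 0 ≠ 0} ≃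
      ({w : Metric.closedBall (0 : ℂ) 1 // (w : ℂ) ≠ 0} × (Fin m → ℂ)) where
  toFun ζ :=
    (⟨⟨(ζ.1 : Cn (m+1)) 0 / (dd m (ζ.1 : Cn (m+1)) : ℂ), by
        have h1 : ‖(ζ.1 : Cn (m+1))‖ ≤ 1 := mem_closedBall_zero_iff.mp ζ.1.2
        have hd := dd_pos m h1 ζ.2
        rw [mem_closedBall_zero_iff, norm_div, Complex.norm_real, Real.norm_eq_abs,
          abs_of_pos hd, div_le_one hd]
        unfold dd; linarith⟩, by
        show (ζ.1 : Cn (m+1)) 0 / (dd m (ζ.1 : Cn (m+1)) : ℂ) ≠ 0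
        have h1 : ‖(ζ.1 : Cn (m+1))‖ ≤ 1 := mem_closedBall_zero_iff.mp ζ.1.2
        have hd := dd_pos m h1 ζ.2
        exact div_ne_zero ζ.2 (Complex.ofReal_ne_zero.mpr hd.ne')⟩,
      fun i => (ζ.1 : Cn (m+1)) i.succ / (ζ.1 : Cn (m+1)) 0)
  invFun p :=
    ⟨⟨vecG m ((p.1.1 : ℂ) / (Dd m (p.1.1 : ℂ) p.2 : ℂ)) p.2, by
        have hw : ‖(p.1.1 : ℂ)‖ ≤ 1 := mem_closedBall_zero_iff.mp p.1.1.2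
        have hD := Dd_pos m (p.1.1 : ℂ) p.2
        have hE := one_le_Ee m p.2
        rw [mem_closedBall_zero_iff, vecG_norm, norm_div, Complex.norm_real,
          Real.norm_eq_abs, abs_of_pos hD, div_mul_eq_mul_div, div_le_one hD]
        unfold Dd
        nlinarith [norm_nonneg (p.1.1 : ℂ)]⟩, by
        show (vecG m ((p.1.1 : ℂ) / (Dd m (p.1.1 : ℂ) p.2 : ℂ)) p.2) 0 ≠ 0
        rw [vecG_zero]
        have hD := Dd_pos m (p.1.1 : ℂ) p.2
        exact div_ne_zero p.1.2 (Complex.ofReal_ne_zero.mpr hD.ne')⟩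
  left_inv := by
    rintro ⟨⟨z, hz⟩, h0⟩
    simp only at h0 ⊢
    apply Subtype.ext
    apply Subtype.ext
    show vecG m _ _ = z
    have h1 : ‖z‖ ≤ 1 := mem_closedBall_zero_iff.mp hz
    have hz0 : (0:ℝ) < ‖z 0‖ := norm_pos_iff.mpr h0
    have hd := dd_pos m h1 h0
    have hwn : ‖z 0 / (dd m z : ℂ)‖ = ‖z 0‖ / dd m z := by
      rw [norm_div, Complex.norm_real, Real.norm_eq_abs, abs_of_pos hd]
    have hE : Ee m (fun i => z i.succ / z 0) = ‖z‖ / ‖z 0‖ := Ee_of m z h0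
    have hD : Dd m (z 0 / (dd m z : ℂ)) (fun i => z i.succ / z 0) = (dd m z)⁻¹ := by
      unfold Dd
      rw [hwn, hE]
      exact real_alg1 ‖z‖ ‖z 0‖ (dd m z) hz0.ne' hd.ne' rfl
    have hc : z 0 / (dd m z : ℂ) /
        ((Dd m (z 0 / (dd m z : ℂ)) (fun i => z i.succ / z 0) : ℝ) : ℂ) = z 0 := by
      rw [hD]
      push_cast
      rw [div_inv_eq_mul, div_mul_cancel₀ _ (Complex.ofReal_ne_zero.mpr hd.ne')]
    rw [hc]
    unfold vecG
    rw [Equiv.symm_apply_eq]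
    funext j
    rw [WithLp.equiv_apply]
    induction j using Fin.cases with
    | zero => rw [Fin.cases_zero, mul_one]
    | succ i =>
      rw [Fin.cases_succ, mul_comm, div_mul_cancel₀ _ h0]
  right_inv := by
    rintro ⟨⟨⟨w, hw⟩, hw0⟩, v⟩
    simp only at hw0 ⊢
    have hwle : ‖w‖ ≤ 1 := mem_closedBall_zero_iff.mp hw
    have hD := Dd_pos m w v
    have hE := one_le_Ee m v
    have hc0 : w / (Dd m w v : ℂ) ≠ 0 := div_ne_zero hw0 (Complex.ofReal_ne_zero.mpr hD.ne')
    have hcn : ‖w / (Dd m w v : ℂ)‖ = ‖w‖ / Dd m w v := by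
      rw [norm_div, Complex.norm_real, Real.norm_eq_abs, abs_of_pos hD]
    have hdz : dd m (vecG m (w / (Dd m w v : ℂ)) v) = (Dd m w v)⁻¹ := by
      unfold dd
      rw [vecG_norm, vecG_zero, hcn]
      exact real_alg2 ‖w‖ (Ee m v) (Dd m w v) hD.ne' rfl
    refine Prod.ext ?_ ?_
    · apply Subtype.ext
      apply Subtype.ext
      show vecG m (w / (Dd m w v : ℂ)) v 0 /
          ((dd m (vecG m (w / (Dd m w v : ℂ)) v) : ℝ) : ℂ) = w
      rw [vecG_zero, hdz]
      push_cast
      rw [div_inv_eq_mul, div_mul_cancel₀ _ (Complex.ofReal_ne_zero.mpr hD.ne')]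
    · funext i
      show vecG m (w / (Dd m w v : ℂ)) v i.succ / vecG m (w / (Dd m w v : ℂ)) v 0 = v i
      rw [vecG_succ, vecG_zero, mul_comm, mul_div_assoc, div_self hc0, mul_one]

end Core
section CoreHomeo

variable (m : ℕ)

theorem cont_val2 : Continuous fun ζ : {ζ : Metric.closedBall (0 : Cn (m+1)) 1 //
    (ζ : Cn (m+1)) 0 ≠ 0} => (ζ.1 : Cn (m+1)) :=
  continuous_subtype_val.comp continuous_subtype_val

theorem cont_dd : Continuous (dd m) := by
  unfold dd
  exact (continuous_const.sub continuous_norm).add (coordCont (m+1) 0).norm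

theorem cont_Dd : Continuous fun p : ℂ × (Fin m → ℂ) => Dd m p.1 p.2 := by
  unfold Dd Ee
  refine continuous_const.add ((continuous_norm.comp continuous_fst).mul (Continuous.sub ?_ continuous_const))
  exact Real.continuous_sqrt.comp (continuous_const.add (continuous_finset_sum Finset.univ
    fun i _ => (((continuous_apply i).comp continuous_snd).norm.pow 2)))

set_option maxHeartbeats 2000000 in
/-- The core homeomorphism. -/
noncomputable def coreHomeo :
    {ζ : Metric.closedBall (0 : Cn (m+1)) 1 // (ζ : Cn (m+1)) 0 ≠ 0} ≃ₜ
      ({w : Metric.closedBall (0 : ℂ) 1 // (w : ℂ) ≠ 0} × (Fin m → ℂ)) where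
  toEquiv := coreEquiv m
  continuous_toFun := by
    have hz : Continuous fun ζ : {ζ : Metric.closedBall (0 : Cn (m+1)) 1 //
        (ζ : Cn (m+1)) 0 ≠ 0} => (ζ.1 : Cn (m+1)) := cont_val2 m
    have h0 : Continuous fun ζ : {ζ : Metric.closedBall (0 : Cn (m+1)) 1 //
        (ζ : Cn (m+1)) 0 ≠ 0} => (ζ.1 : Cn (m+1)) 0 := (coordCont (m+1) 0).comp hz
    have hdd : Continuous fun ζ : {ζ : Metric.closedBall (0 : Cn (m+1)) 1 //
        (ζ : Cn (m+1)) 0 ≠ 0} => dd m (ζ.1 : Cn (m+1)) := (cont_dd m).comp hz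
    refine Continuous.prodMk (Continuous.subtype_mk (Continuous.subtype_mk ?_ _) _) ?_
    · refine Continuous.div h0 (Complex.continuous_ofReal.comp hdd) fun ζ => ?_
      exact Complex.ofReal_ne_zero.mpr
        (dd_pos m (mem_closedBall_zero_iff.mp ζ.1.2) ζ.2).ne'
    · refine continuous_pi fun i => Continuous.div (((coordCont (m+1) i.succ).comp hz)) h0
        fun ζ => ζ.2
  continuous_invFun := by
    have hw : Continuous fun p : {w : Metric.closedBall (0 : ℂ) 1 // (w : ℂ) ≠ 0} ×
        (Fin m → ℂ) => (p.1.1 : ℂ) :=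
      continuous_subtype_val.comp (continuous_subtype_val.comp continuous_fst)
    have hc : Continuous fun p : {w : Metric.closedBall (0 : ℂ) 1 // (w : ℂ) ≠ 0} ×
        (Fin m → ℂ) => (p.1.1 : ℂ) / (Dd m (p.1.1 : ℂ) p.2 : ℂ) := by
      refine Continuous.div hw (Complex.continuous_ofReal.comp ((cont_Dd m).comp
        (hw.prodMk continuous_snd))) fun p => ?_
      exact Complex.ofReal_ne_zero.mpr (Dd_pos m _ _).ne'
    refine Continuous.subtype_mk (Continuous.subtype_mk ?_ _) _
    show Continuous fun p : {w : Metric.closedBall (0 : ℂ) 1 // (w : ℂ) ≠ 0} ×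
        (Fin m → ℂ) => vecG m ((p.1.1 : ℂ) / (Dd m (p.1.1 : ℂ) p.2 : ℂ)) p.2
    unfold vecG
    refine (PiLp.continuous_toLp 2 (fun _ : Fin (m+1) => ℂ)).comp ?_
    refine continuous_pi fun j => ?_
    induction j using Fin.cases with
    | zero => simpa using hc
    | succ i =>
      simp only [Fin.cases_succ]
      exact hc.mul ((continuous_apply i).comp continuous_snd)

end CoreHomeo
section Assemble

variable (m : ℕ)

theorem psiG_prop (p : {p : DE (m+1) // p ∉ closure (Hhyp m)}) :
    ((psiG p.1 : Metric.closedBall (0 : Cn (m+1)) 1) : Cn (m+1)) 0 ≠ 0 := by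
  intro hcontra
  apply p.2
  have := (mem_closure_Hhyp m (psiG p.1)).mpr hcontra
  rwa [phiD_eq, phiG_psiG] at this

theorem phiD_prop (ζ : {ζ : Metric.closedBall (0 : Cn (m+1)) 1 // (ζ : Cn (m+1)) 0 ≠ 0}) :
    phiD (m+1) ζ.1 ∉ closure (Hhyp m) := by
  intro hcontra
  exact ζ.2 ((mem_closure_Hhyp m ζ.1).mp hcontra)

theorem phiDC_prop (w : {w : Metric.closedBall (0 : ℂ) 1 // (w : ℂ) ≠ 0}) :
    phiDC w.1 ≠ Sum.inl 0 := by
  intro hcontra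
  exact w.2 ((phiDC_eq_inl_zero_iff w.1).mp hcontra)

theorem psiGC_prop (q : {q : DC // q ≠ Sum.inl 0}) :
    ((psiG q.1 : Metric.closedBall (0 : ℂ) 1) : ℂ) ≠ 0 := by
  intro h0
  apply q.2
  have := (phiDC_eq_inl_zero_iff (psiG q.1)).mpr h0
  rwa [phiDC_eq, phiG_psiG] at this

/-- Restriction of `hDE` to the complement of the closure of the hyperplane. -/
noncomputable def subA : {p : DE (m+1) // p ∉ closure (Hhyp m)} ≃ₜ
    {ζ : Metric.closedBall (0 : Cn (m+1)) 1 // (ζ : Cn (m+1)) 0 ≠ 0} where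
  toFun p := ⟨psiG p.1, psiG_prop m p⟩
  invFun ζ := ⟨phiD (m+1) ζ.1, phiD_prop m ζ⟩
  left_inv p := Subtype.ext (by simp only; rw [phiD_eq, phiG_psiG])
  right_inv ζ := Subtype.ext (by simp only; rw [phiD_eq]; exact psiG_phiG ζ.1)
  continuous_toFun :=
    Continuous.subtype_mk ((hDE (m+1)).symm.continuous.comp continuous_subtype_val)
      (psiG_prop m)
  continuous_invFun :=
    Continuous.subtype_mk ((hDE (m+1)).continuous.comp continuous_subtype_val)
      (phiD_prop m)

/-- Restriction of `hDC` to the punctured disc. -/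
noncomputable def subQ : {w : Metric.closedBall (0 : ℂ) 1 // (w : ℂ) ≠ 0} ≃ₜ
    {q : DC // q ≠ Sum.inl 0} where
  toFun w := ⟨phiDC w.1, phiDC_prop w⟩
  invFun q := ⟨psiG q.1, psiGC_prop q⟩
  left_inv w := Subtype.ext (by simp only; rw [phiDC_eq]; exact psiG_phiG w.1)
  right_inv q := Subtype.ext (by simp only; rw [phiDC_eq]; exact phiG_psiG q.1)
  continuous_toFun :=
    Continuous.subtype_mk (hDC.continuous.comp continuous_subtype_val) phiDC_prop
  continuous_invFun :=
    Continuous.subtype_mk (hDC.symm.continuous.comp continuous_subtype_val) psiGC_prop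

/-- The full homeomorphism. -/
noncomputable def PhiHat : {p : DE (m+1) // p ∉ closure (Hhyp m)} ≃ₜ
    ({q : DC // q ≠ Sum.inl 0} × (Fin m → ℂ)) :=
  (subA m).trans ((coreHomeo m).trans (subQ.prodCongr (Homeomorph.refl (Fin m → ℂ))))

theorem PhiHat_apply (p : {p : DE (m+1) // p ∉ closure (Hhyp m)}) :
    PhiHat m p = (subQ ((coreHomeo m (subA m p)).1), (coreHomeo m (subA m p)).2) := rfl

end Assemble
section Eval

variable (m : ℕ)

theorem smul_coord (s : ℝ) (z : Cn (m+1)) (j : Fin (m+1)) :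
    (s • z) j = (s : ℂ) * z j := by
  rw [PiLp.smul_apply, Complex.real_smul]

theorem norm_smul_inv (z : Cn (m+1)) :
    ‖((1+‖z‖)⁻¹ • z : Cn (m+1))‖ = ‖z‖ / (1+‖z‖) := by
  have h0 : (0:ℝ) < 1 + ‖z‖ := by positivity
  rw [norm_smul, norm_inv, Real.norm_eq_abs, abs_of_pos h0, inv_mul_eq_div]

theorem dd_smul (z : Cn (m+1)) :
    dd m ((1+‖z‖)⁻¹ • z) = (1+‖z 0‖) / (1+‖z‖) := by
  have h0 : (0:ℝ) < 1 + ‖z‖ := by positivity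
  unfold dd
  rw [norm_smul_inv, smul_coord, norm_mul, Complex.norm_real, Real.norm_eq_abs,
    abs_of_pos (inv_pos.mpr h0)]
  field_simp
  ring

theorem ofReal_one_add_ne (a : ℝ) (ha : (0:ℝ) ≤ a) : (1+(a:ℂ)) ≠ 0 := by
  intro h
  have := congrArg Complex.re h
  simp at this
  linarith

theorem val_smul_div (z : Cn (m+1)) :
    ((1+‖z‖)⁻¹ • z : Cn (m+1)) 0 / ((dd m ((1+‖z‖)⁻¹ • z : Cn (m+1)) : ℝ) : ℂ)
      = (1+‖z 0‖)⁻¹ • (z 0) := by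
  have ha' := ofReal_one_add_ne ‖z‖ (norm_nonneg z)
  have hb' := ofReal_one_add_ne ‖z 0‖ (norm_nonneg (z 0))
  rw [smul_coord, dd_smul, Complex.real_smul]
  push_cast
  field_simp

end Eval

theorem PhiHat_homeomorph' (m : ℕ) :
    ∃ Φhat : {p : DE (m + 1) // p ∉ closure (Hhyp m)} ≃ₜ
        ({q : DC // q ≠ Sum.inl 0} × (Fin m → ℂ)),
      (∀ (z : Cn (m + 1)) (hz : (Sum.inl z : DE (m + 1)) ∉ closure (Hhyp m)),
        ((Φhat ⟨Sum.inl z, hz⟩).1 : DC) = Sum.inl (z 0) ∧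
        (Φhat ⟨Sum.inl z, hz⟩).2 = fun i => z i.succ / z 0) ∧
      (∀ (x : Metric.sphere (0 : Cn (m + 1)) 1)
          (hx : (Sum.inr x : DE (m + 1)) ∉ closure (Hhyp m)),
        (∃ c : Metric.sphere (0 : ℂ) 1,
          ((Φhat ⟨Sum.inr x, hx⟩).1 : DC) = Sum.inr c ∧
          (c : ℂ) = (x : Cn (m + 1)) 0 / ((‖(x : Cn (m + 1)) 0‖ : ℝ) : ℂ)) ∧
        (Φhat ⟨Sum.inr x, hx⟩).2 =
          fun i => (x : Cn (m + 1)) i.succ / (x : Cn (m + 1)) 0) := by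
  refine ⟨PhiHat m, fun z hz => ⟨?_, ?_⟩, fun x hx => ?_⟩
  · -- first coordinate at a finite point
    have hval : ((coreHomeo m (subA m ⟨Sum.inl z, hz⟩)).1).1
        = psiG (Sum.inl (z 0)) := by
      apply Subtype.ext
      show ((1+‖z‖)⁻¹ • z : Cn (m+1)) 0 / ((dd m ((1+‖z‖)⁻¹ • z : Cn (m+1)) : ℝ) : ℂ)
        = (1+‖z 0‖)⁻¹ • (z 0)
      exact val_smul_div m z
    have hrfl : ((PhiHat m ⟨Sum.inl z, hz⟩).1 : DC)
        = phiDC ((coreHomeo m (subA m ⟨Sum.inl z, hz⟩)).1).1 := rfl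
    rw [hrfl, hval, phiDC_eq]
    exact phiG_psiG (Sum.inl (z 0))
  · -- second coordinate at a finite point
    have h0 : z 0 ≠ 0 := by
      have := psiG_prop m ⟨Sum.inl z, hz⟩
      show z 0 ≠ 0
      intro hc
      apply this
      show ((1+‖z‖)⁻¹ • z : Cn (m+1)) 0 = 0
      rw [smul_coord, hc, mul_zero]
    have hs : (((1+‖z‖)⁻¹ : ℝ) : ℂ) ≠ 0 := by
      have h0' : (0:ℝ) < 1 + ‖z‖ := by positivity
      exact Complex.ofReal_ne_zero.mpr (inv_pos.mpr h0').ne'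
    have hrfl : (PhiHat m ⟨Sum.inl z, hz⟩).2
        = fun i => ((1+‖z‖)⁻¹ • z : Cn (m+1)) i.succ / ((1+‖z‖)⁻¹ • z : Cn (m+1)) 0 := rfl
    rw [hrfl]
    funext i
    rw [smul_coord, smul_coord, mul_div_mul_left _ _ hs]
  · -- the boundary case
    have h0x : (x : Cn (m+1)) 0 ≠ 0 := psiG_prop m ⟨Sum.inr x, hx⟩
    have hb : (0:ℝ) < ‖(x : Cn (m+1)) 0‖ := norm_pos_iff.mpr h0x
    have hxnorm : ‖(x : Cn (m+1))‖ = 1 := mem_sphere_zero_iff_norm.mp x.2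
    have hddx : dd m (x : Cn (m+1)) = ‖(x : Cn (m+1)) 0‖ := by
      unfold dd; rw [hxnorm]; ring
    have hnorm1 : ‖(x : Cn (m+1)) 0 / ((‖(x : Cn (m+1)) 0‖ : ℝ) : ℂ)‖ = 1 := by
      rw [norm_div, Complex.norm_real, Real.norm_eq_abs, abs_of_pos hb, div_self hb.ne']
    refine ⟨⟨⟨(x : Cn (m+1)) 0 / ((‖(x : Cn (m+1)) 0‖ : ℝ) : ℂ),
      mem_sphere_zero_iff_norm.mpr hnorm1⟩, ?_, ?_⟩, ?_⟩
    · have hX1 : ((coreHomeo m (subA m ⟨Sum.inr x, hx⟩)).1).1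
          = ⟨(x : Cn (m+1)) 0 / ((‖(x : Cn (m+1)) 0‖ : ℝ) : ℂ),
             mem_closedBall_zero_iff.mpr (le_of_eq hnorm1)⟩ := by
        apply Subtype.ext
        show (x : Cn (m+1)) 0 / ((dd m (x : Cn (m+1)) : ℝ) : ℂ)
          = (x : Cn (m+1)) 0 / ((‖(x : Cn (m+1)) 0‖ : ℝ) : ℂ)
        rw [hddx]
      have hrfl : ((PhiHat m ⟨Sum.inr x, hx⟩).1 : DC)
          = phiDC ((coreHomeo m (subA m ⟨Sum.inr x, hx⟩)).1).1 := rfl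
      rw [hrfl, hX1]
      have hnotlt : ¬ ‖((⟨(x : Cn (m+1)) 0 / ((‖(x : Cn (m+1)) 0‖ : ℝ) : ℂ),
          mem_closedBall_zero_iff.mpr (le_of_eq hnorm1)⟩ :
            Metric.closedBall (0:ℂ) 1) : ℂ)‖ < 1 := by
        rw [hnorm1]
        exact lt_irrefl 1
      simp only [phiDC, dif_neg hnotlt]
    · show (x : Cn (m+1)) 0 / ((‖(x : Cn (m+1)) 0‖ : ℝ) : ℂ)
        = (x : Cn (m+1)) 0 / ((‖(x : Cn (m+1)) 0‖ : ℝ) : ℂ)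
      rfl
    · rfl

/-- The map `Φ̂ = Φ ⊔ φ` from `𝔻_{ℂⁿ} ∖ closure({z₁ = 0})` to
`(𝔻_ℂ ∖ {0}) × ℂ^{n-1}` is a homeomorphism, where
`Φ(z₁,…,z_n) = (z₁, z₂/z₁, …, z_n/z₁)` and
`φ((z₁,…,z_n)∞) = ((z₁/|z₁|)∞, z₂/z₁, …, z_n/z₁)`. -/
theorem PhiHat_homeomorph (m : ℕ) :
    ∃ Φhat : {p : DE (m + 1) // p ∉ closure (Hhyp m)} ≃ₜ
        ({q : DC // q ≠ Sum.inl 0} × (Fin m → ℂ)),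
      (∀ (z : Cn (m + 1)) (hz : (Sum.inl z : DE (m + 1)) ∉ closure (Hhyp m)),
        ((Φhat ⟨Sum.inl z, hz⟩).1 : DC) = Sum.inl (z 0) ∧
        (Φhat ⟨Sum.inl z, hz⟩).2 = fun i => z i.succ / z 0) ∧
      (∀ (x : Metric.sphere (0 : Cn (m + 1)) 1)
          (hx : (Sum.inr x : DE (m + 1)) ∉ closure (Hhyp m)),
        (∃ c : Metric.sphere (0 : ℂ) 1,
          ((Φhat ⟨Sum.inr x, hx⟩).1 : DC) = Sum.inr c ∧
          (c : ℂ) = (x : Cn (m + 1)) 0 / ((‖(x : Cn (m + 1)) 0‖ : ℝ) : ℂ)) ∧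
        (Φhat ⟨Sum.inr x, hx⟩).2 =
          fun i => (x : Cn (m + 1)) i.succ / (x : Cn (m + 1)) 0) := by
  exact PhiHat_homeomorph' m
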